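/- With r_s defined using k = 0 (i.e. c₀ s r_s^d = log s − log log s + ξ + log(αβ/d)), one has lim_{s→∞} s ∫₁^∞ exp(−c₀ s r_s^d · w^{d/α}) β w^{−β−1} dw = e^{−ξ}. -/

import Mathlib

open MeasureTheory Filter Set

-- log t ≤ t/2 for t > 0
lemma aux_log_le_half {t : ℝ} (ht : 0 < t) : Real.log t ≤ t / 2 := by
  rcases le_or_gt t 1 with h | h
  · have := Real.log_nonpos ht.le h
    linarith
  · have hs : 0 < Real.sqrt t := Real.sqrt_pos.2 ht
    have h1 : Real.log (Real.sqrt t) ≤ Real.sqrt t - 1 :=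
      Real.log_le_sub_one_of_pos hs
    have h2 : Real.log (Real.sqrt t) = Real.log t / 2 := Real.log_sqrt ht.le
    nlinarith [sq_nonneg (Real.sqrt t - 2), Real.sq_sqrt ht.le]

-- Bernoulli-type upper bound: w^γ ≤ 1 + γ (w - 1) for w > 0, 0 ≤ γ ≤ 1
lemma aux_rpow_le_linear {w γ : ℝ} (hw : 0 < w) (hγ0 : 0 ≤ γ) (hγ1 : γ ≤ 1) :
    w ^ γ ≤ 1 + γ * (w - 1) := by
  have h := convexOn_exp.2 (mem_univ (Real.log w)) (mem_univ (0 : ℝ)) hγ0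
    (by linarith : (0:ℝ) ≤ 1 - γ) (by ring)
  simp only [smul_eq_mul, mul_zero, add_zero, Real.exp_zero] at h
  rw [Real.rpow_def_of_pos hw, mul_comm]
  calc Real.exp (γ * Real.log w) ≤ γ * Real.exp (Real.log w) + (1 - γ) * 1 := h
    _ = 1 + γ * (w - 1) := by rw [Real.exp_log hw]; ring

-- chord lower bound on Ioc 1 (1+δ)
lemma aux_chord {w γ δ : ℝ} (hγ0 : 0 ≤ γ) (hγ1 : γ ≤ 1) (hδ : 0 < δ)
    (hw1 : 1 < w) (hw2 : w ≤ 1 + δ) :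
    1 + ((1 + δ) ^ γ - 1) / δ * (w - 1) ≤ w ^ γ := by
  set t : ℝ := (w - 1) / δ with htdef
  have ht0 : 0 ≤ t := div_nonneg (by linarith) hδ.le
  have ht1 : t ≤ 1 := by
    rw [div_le_one hδ]; linarith
  have hconc := (Real.concaveOn_rpow hγ0 hγ1).2 (by norm_num : (1:ℝ) ∈ Ici (0:ℝ))
    (show (1+δ:ℝ) ∈ Ici (0:ℝ) from mem_Ici.2 (by linarith)) (by linarith : (0:ℝ) ≤ 1 - t) ht0 (by ring)
  have hδt : δ * t = w - 1 := by rw [htdef, mul_comm, div_mul_cancel₀ _ hδ.ne']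
  have hw : (1 - t) • (1:ℝ) + t • (1 + δ) = w := by
    field_simp [htdef]
    linear_combination hδt
  rw [hw] at hconc
  have h1 : ((1:ℝ)) ^ γ = 1 := Real.one_rpow γ
  calc 1 + ((1 + δ) ^ γ - 1) / δ * (w - 1)
      = (1 - t) • ((1:ℝ)) ^ γ + t • ((1 + δ) ^ γ) := by
        rw [h1]; simp only [smul_eq_mul]; field_simp [htdef]; linear_combination (1 - (1 + δ) ^ γ) * hδt
    _ ≤ w ^ γ := hconc

-- integrability of the main integrand
lemma aux_integrable {β : ℝ} (hβ1 : 1 < β) {L γ : ℝ} (hL : 0 ≤ L) :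
    IntegrableOn (fun w : ℝ => Real.exp (-(L * w ^ γ)) * (β * w ^ (-β - 1)))
      (Ioi (1:ℝ)) := by
  have hg : IntegrableOn (fun w : ℝ => β * w ^ (-β - 1)) (Ioi (1:ℝ)) :=
    (integrableOn_Ioi_rpow_of_lt (by linarith) one_pos).const_mul β
  refine hg.mono' ?_ ?_
  · apply Measurable.aestronglyMeasurable
    fun_prop
  · filter_upwards [ae_restrict_mem measurableSet_Ioi] with w hw
    have hw0 : (0:ℝ) < w := lt_trans one_pos hw
    have h1 : Real.exp (-(L * w ^ γ)) ≤ 1 := by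
      rw [Real.exp_le_one_iff]
      have : 0 ≤ L * w ^ γ := mul_nonneg hL (Real.rpow_nonneg hw0.le _)
      linarith
    have h2 : 0 ≤ β * w ^ (-β - 1) :=
      mul_nonneg (by linarith) (Real.rpow_nonneg hw0.le _)
    rw [Real.norm_eq_abs, abs_of_nonneg (mul_nonneg (Real.exp_pos _).le h2)]
    nlinarith

-- the exponential integral on Ioc a (a+δ)
lemma aux_exp_integral (a δ c : ℝ) (hδ : 0 ≤ δ) (hc : 0 < c) :
    ∫ w in Ioc a (a + δ), Real.exp (-(c * (w - a))) =
      (1 - Real.exp (-(c * δ))) / c := by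
  rw [← intervalIntegral.integral_of_le (by linarith : a ≤ a + δ)]
  have hderiv : ∀ x ∈ uIcc a (a + δ),
      HasDerivAt (fun w => -Real.exp (-(c * (w - a))) / c)
        (Real.exp (-(c * (x - a)))) x := by
    intro x _
    have h1 : HasDerivAt (fun w : ℝ => -(c * (w - a))) (-c) x := by
      have : HasDerivAt (fun w : ℝ => w - a) 1 x := (hasDerivAt_id x).sub_const a
      simpa using ((this.const_mul c).fun_neg)
    have h2 := (Real.hasDerivAt_exp (-(c * (x - a)))).comp x h1
    have h3 := (h2.div_const c).fun_neg
    have e : (fun w => -Real.exp (-(c * (w - a))) / c)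
        = fun i => -((Real.exp ∘ fun w => -(c * (w - a))) i / c) := by
      funext y; simp [Function.comp, neg_div]
    rw [e]
    exact h3.congr_deriv (by rw [mul_neg, neg_div, neg_neg, mul_div_assoc, div_self hc.ne', mul_one])
  have hcont : IntervalIntegrable (fun x => Real.exp (-(c * (x - a)))) volume a (a + δ) := by
    apply Continuous.intervalIntegrable
    fun_prop
  rw [intervalIntegral.integral_eq_sub_of_hasDerivAt hderiv hcont]
  simp only [add_sub_cancel_left, sub_self, mul_zero, neg_zero, Real.exp_zero]
  field_simp
  ring

lemma aux_lower (β γ δ L : ℝ) (hβ1 : 1 < β) (hγ0 : 0 < γ) (hγ1 : γ < 1)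
    (hδ : 0 < δ) (hL : 0 < L) :
    Real.exp (-L) * ((1 - Real.exp (-(γ * L * δ))) / (γ * L)) * (β * (1 + δ) ^ (-β - 1))
      ≤ ∫ w in Ioi (1:ℝ), Real.exp (-(L * w ^ γ)) * (β * w ^ (-β - 1)) := by
  have hfi : IntegrableOn (fun w : ℝ => Real.exp (-(L * w ^ γ)) * (β * w ^ (-β - 1)))
      (Ioi (1:ℝ)) := aux_integrable hβ1 hL.le
  have hIoc : Ioc (1:ℝ) (1 + δ) ⊆ Ioi 1 := Ioc_subset_Ioi_self
  set C : ℝ := β * (1 + δ) ^ (-β - 1) with hC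
  have hCpos : 0 < C := mul_pos (by linarith) (Real.rpow_pos_of_pos (by linarith) _)
  have step1 : ∫ w in Ioc (1:ℝ) (1 + δ), (Real.exp (-L) * C) * Real.exp (-((γ * L) * (w - 1)))
      ≤ ∫ w in Ioc (1:ℝ) (1 + δ), Real.exp (-(L * w ^ γ)) * (β * w ^ (-β - 1)) := by
    apply setIntegral_mono_on
    · apply Continuous.integrableOn_Ioc
      fun_prop
    · exact hfi.mono_set hIoc
    · exact measurableSet_Ioc
    · intro w hw
      have hw0 : (0:ℝ) < w := lt_trans one_pos hw.1
      have e1 : w ^ γ ≤ 1 + γ * (w - 1) := aux_rpow_le_linear hw0 hγ0.le hγ1.le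
      have eexp : (Real.exp (-L)) * Real.exp (-((γ * L) * (w - 1)))
          ≤ Real.exp (-(L * w ^ γ)) := by
        rw [← Real.exp_add, Real.exp_le_exp]
        nlinarith
      have epow : C ≤ β * w ^ (-β - 1) := by
        apply mul_le_mul_of_nonneg_left _ (by linarith : (0:ℝ) ≤ β)
        exact Real.rpow_le_rpow_of_nonpos hw0 hw.2 (by linarith)
      calc Real.exp (-L) * C * Real.exp (-((γ * L) * (w - 1)))
          = (Real.exp (-L) * Real.exp (-((γ * L) * (w - 1)))) * C := by ring
        _ ≤ Real.exp (-(L * w ^ γ)) * (β * w ^ (-β - 1)) :=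
            mul_le_mul eexp epow hCpos.le (Real.exp_pos _).le
  have step2 : ∫ w in Ioc (1:ℝ) (1 + δ), (Real.exp (-L) * C) * Real.exp (-((γ * L) * (w - 1)))
      = Real.exp (-L) * C * ((1 - Real.exp (-(γ * L * δ))) / (γ * L)) := by
    rw [MeasureTheory.integral_const_mul, aux_exp_integral 1 δ (γ * L) hδ.le (mul_pos hγ0 hL)]
  have step3 : ∫ w in Ioc (1:ℝ) (1 + δ), Real.exp (-(L * w ^ γ)) * (β * w ^ (-β - 1))
      ≤ ∫ w in Ioi (1:ℝ), Real.exp (-(L * w ^ γ)) * (β * w ^ (-β - 1)) := by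
    apply setIntegral_mono_set hfi
    · filter_upwards [ae_restrict_mem measurableSet_Ioi] with w hw
      have hw0 : (0:ℝ) < w := lt_trans one_pos hw
      positivity
    · exact HasSubset.Subset.eventuallyLE hIoc
  calc Real.exp (-L) * ((1 - Real.exp (-(γ * L * δ))) / (γ * L)) * C
      = Real.exp (-L) * C * ((1 - Real.exp (-(γ * L * δ))) / (γ * L)) := by ring
    _ = _ := step2.symm
    _ ≤ _ := step1
    _ ≤ _ := step3

lemma aux_upper (β γ δ L : ℝ) (hβ1 : 1 < β) (hγ0 : 0 < γ) (hγ1 : γ < 1)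
    (hδ : 0 < δ) (hL : 0 < L) :
    ∫ w in Ioi (1:ℝ), Real.exp (-(L * w ^ γ)) * (β * w ^ (-β - 1))
      ≤ Real.exp (-L) * (β / ((((1 + δ) ^ γ - 1) / δ) * L))
        + Real.exp (-((1 + δ) ^ γ * L)) * (1 + δ) ^ (-β) := by
  have hfi : IntegrableOn (fun w : ℝ => Real.exp (-(L * w ^ γ)) * (β * w ^ (-β - 1)))
      (Ioi (1:ℝ)) := aux_integrable hβ1 hL.le
  set m : ℝ := ((1 + δ) ^ γ - 1) / δ with hm
  have hp : (1:ℝ) < (1 + δ) ^ γ :=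
    (Real.one_lt_rpow_iff_of_pos (by linarith)).2 (Or.inl ⟨by linarith, hγ0⟩)
  have hmpos : 0 < m := div_pos (by linarith) hδ
  have hsub : Ioi (1 + δ : ℝ) ⊆ Ioi 1 := Ioi_subset_Ioi (by linarith)
  have hsplit : ∫ w in Ioi (1:ℝ), Real.exp (-(L * w ^ γ)) * (β * w ^ (-β - 1))
      = (∫ w in Ioc (1:ℝ) (1 + δ), Real.exp (-(L * w ^ γ)) * (β * w ^ (-β - 1)))
        + ∫ w in Ioi (1 + δ : ℝ), Real.exp (-(L * w ^ γ)) * (β * w ^ (-β - 1)) := by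
    rw [← Ioc_union_Ioi_eq_Ioi (by linarith : (1:ℝ) ≤ 1 + δ)]
    exact setIntegral_union Ioc_disjoint_Ioi_same measurableSet_Ioi
      (hfi.mono_set Ioc_subset_Ioi_self) (hfi.mono_set hsub)
  have piece1 : ∫ w in Ioc (1:ℝ) (1 + δ), Real.exp (-(L * w ^ γ)) * (β * w ^ (-β - 1))
      ≤ Real.exp (-L) * (β / (m * L)) := by
    have h1 : ∫ w in Ioc (1:ℝ) (1 + δ), Real.exp (-(L * w ^ γ)) * (β * w ^ (-β - 1))
        ≤ ∫ w in Ioc (1:ℝ) (1 + δ), (Real.exp (-L) * β) * Real.exp (-((m * L) * (w - 1))) := by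
      apply setIntegral_mono_on
      · exact hfi.mono_set Ioc_subset_Ioi_self
      · apply Continuous.integrableOn_Ioc
        fun_prop
      · exact measurableSet_Ioc
      · intro w hw
        have hw0 : (0:ℝ) < w := lt_trans one_pos hw.1
        have e1 : 1 + m * (w - 1) ≤ w ^ γ := aux_chord hγ0.le hγ1.le hδ hw.1 hw.2
        have eexp : Real.exp (-(L * w ^ γ))
            ≤ Real.exp (-L) * Real.exp (-((m * L) * (w - 1))) := by
          rw [← Real.exp_add, Real.exp_le_exp]
          nlinarith
        have epow : β * w ^ (-β - 1) ≤ β := by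
          have := Real.rpow_le_one_of_one_le_of_nonpos hw.1.le
            (by linarith : -β - 1 ≤ (0:ℝ))
          nlinarith
        calc Real.exp (-(L * w ^ γ)) * (β * w ^ (-β - 1))
            ≤ (Real.exp (-L) * Real.exp (-((m * L) * (w - 1)))) * β := by
              apply mul_le_mul eexp epow _ (by positivity)
              have hw0' : (0:ℝ) ≤ w ^ (-β - 1) := Real.rpow_nonneg hw0.le _
              positivity
          _ = (Real.exp (-L) * β) * Real.exp (-((m * L) * (w - 1))) := by ring
    have h2 : ∫ w in Ioc (1:ℝ) (1 + δ), (Real.exp (-L) * β) * Real.exp (-((m * L) * (w - 1)))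
        = (Real.exp (-L) * β) * ((1 - Real.exp (-(m * L * δ))) / (m * L)) := by
      rw [MeasureTheory.integral_const_mul,
        aux_exp_integral 1 δ (m * L) hδ.le (mul_pos hmpos hL)]
    have h3 : (Real.exp (-L) * β) * ((1 - Real.exp (-(m * L * δ))) / (m * L))
        ≤ Real.exp (-L) * (β / (m * L)) := by
      have hml : 0 < m * L := mul_pos hmpos hL
      have : (1 - Real.exp (-(m * L * δ))) / (m * L) ≤ 1 / (m * L) := by
        apply div_le_div_of_nonneg_right _ hml.le
        · have := (Real.exp_pos (-(m * L * δ))).le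
          linarith
      calc (Real.exp (-L) * β) * ((1 - Real.exp (-(m * L * δ))) / (m * L))
          ≤ (Real.exp (-L) * β) * (1 / (m * L)) := by
            apply mul_le_mul_of_nonneg_left this (by positivity)
        _ = Real.exp (-L) * (β / (m * L)) := by ring
    linarith [h1.trans (le_of_eq h2) |>.trans h3]
  have piece2 : ∫ w in Ioi (1 + δ : ℝ), Real.exp (-(L * w ^ γ)) * (β * w ^ (-β - 1))
      ≤ Real.exp (-((1 + δ) ^ γ * L)) * (1 + δ) ^ (-β) := by
    have h1 : ∫ w in Ioi (1 + δ : ℝ), Real.exp (-(L * w ^ γ)) * (β * w ^ (-β - 1))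
        ≤ ∫ w in Ioi (1 + δ : ℝ), Real.exp (-((1 + δ) ^ γ * L)) * (β * w ^ (-β - 1)) := by
      apply setIntegral_mono_on
      · exact hfi.mono_set hsub
      · apply Integrable.const_mul
        exact (integrableOn_Ioi_rpow_of_lt (by linarith) (by linarith)).const_mul β
      · exact measurableSet_Ioi
      · intro w hw
        have hw1 : (1 + δ : ℝ) ≤ w := le_of_lt hw
        have hw0 : (0:ℝ) < w := by linarith
        have e1 : (1 + δ) ^ γ ≤ w ^ γ := Real.rpow_le_rpow (by linarith) hw1 hγ0.le
        have eexp : Real.exp (-(L * w ^ γ)) ≤ Real.exp (-((1 + δ) ^ γ * L)) := by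
          rw [Real.exp_le_exp]
          nlinarith
        apply mul_le_mul_of_nonneg_right eexp
        have : (0:ℝ) ≤ w ^ (-β - 1) := Real.rpow_nonneg hw0.le _
        positivity
    have h2 : ∫ w in Ioi (1 + δ : ℝ), Real.exp (-((1 + δ) ^ γ * L)) * (β * w ^ (-β - 1))
        = Real.exp (-((1 + δ) ^ γ * L)) * (1 + δ) ^ (-β) := by
      rw [MeasureTheory.integral_const_mul, MeasureTheory.integral_const_mul,
        integral_Ioi_rpow_of_lt (by linarith : -β - 1 < -1) (by linarith : (0:ℝ) < 1 + δ)]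
      have hb : (-β - 1) + 1 = -β := by ring
      rw [hb]
      have hβ0 : β ≠ 0 := by linarith
      field_simp
    exact h1.trans (le_of_eq h2)
  rw [hsplit]
  exact add_le_add piece1 piece2

lemma aux_alg1 (a e b m l : ℝ) : a * e / l * (b / m) = a * e * (b / (m * l)) := by
  rw [div_eq_mul_inv, div_eq_mul_inv, div_eq_mul_inv, mul_inv]; ring

lemma aux_slope : ∀ γ : ℝ, γ ≠ 0 →
    Tendsto (fun x : ℝ => ((1 + x) ^ γ - 1) / x) (nhdsWithin 0 (Ioi 0)) (nhds γ) := by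
  intro γ hγ
  have hbase : HasDerivAt (fun x : ℝ => 1 + x) 1 0 := by
    simpa using (hasDerivAt_id (0:ℝ)).const_add 1
  have hrpow : HasDerivAt (fun y : ℝ => y ^ γ) (γ * (1:ℝ) ^ (γ - 1)) ((1:ℝ) + 0) := by
    rw [show (1:ℝ) + 0 = 1 by norm_num]
    exact Real.hasDerivAt_rpow_const (Or.inl one_ne_zero)
  have hcomp := hrpow.comp 0 hbase
  simp only [Real.one_rpow, mul_one] at hcomp
  have hslope := hasDerivAt_iff_tendsto_slope.1 hcomp
  have hmono : nhdsWithin (0:ℝ) (Ioi 0) ≤ nhdsWithin 0 {(0:ℝ)}ᶜ :=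
    nhdsWithin_mono 0 (fun x hx => ne_of_gt hx)
  refine (hslope.mono_left hmono).congr' ?_
  filter_upwards [self_mem_nhdsWithin] with x hx
  rw [slope_def_field]
  simp [Real.one_rpow]

lemma aux_main {β γ ξ : ℝ} (hβ1 : 1 < β) (hγ0 : 0 < γ) (hγ1 : γ < 1)
    (L : ℝ → ℝ) (hA : Tendsto L atTop atTop)
    (hB : Tendsto (fun s => s * Real.exp (-L s) / L s) atTop
      (nhds (γ / β * Real.exp (-ξ)))) :
    Tendsto (fun s => s * ∫ w in Ioi (1:ℝ),
        Real.exp (-(L s * w ^ γ)) * (β * w ^ (-β - 1)))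
      atTop (nhds (Real.exp (-ξ))) := by
  rw [Metric.tendsto_nhds]
  intro ε hε
  -- choose δ
  obtain ⟨δ, hδ0, hX1, hX2⟩ : ∃ δ : ℝ, 0 < δ ∧
      Real.exp (-ξ) - ε/2 < Real.exp (-ξ) * (1 + δ) ^ (-β - 1) ∧
      Real.exp (-ξ) * (γ / (((1 + δ) ^ γ - 1) / δ)) < Real.exp (-ξ) + ε/2 := by
    have h1 : Tendsto (fun x : ℝ => Real.exp (-ξ) * (1 + x) ^ (-β - 1))
        (nhdsWithin 0 (Ioi 0)) (nhds (Real.exp (-ξ))) := by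
      have hc : ContinuousAt (fun y : ℝ => y ^ (-β - 1)) ((fun x : ℝ => 1 + x) 0) := by
        rw [show (fun x : ℝ => 1 + x) 0 = 1 by norm_num]
        exact Real.continuousAt_rpow_const 1 _ (Or.inl one_ne_zero)
      have h0 := (hc.comp (by fun_prop : ContinuousAt (fun x : ℝ => 1 + x) 0)).tendsto
      have h0' : Tendsto (fun x : ℝ => (1 + x) ^ (-β - 1)) (nhds 0)
          (nhds (((1:ℝ) + 0) ^ (-β - 1))) := h0
      rw [show ((1:ℝ) + 0) ^ (-β - 1) = 1 by norm_num [Real.one_rpow]] at h0'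
      have h := h0'.const_mul (Real.exp (-ξ))
      rw [mul_one] at h
      exact (h.mono_left (nhdsWithin_le_nhds (s := Ioi (0:ℝ)))).congr fun x => by ring
    have h2 : Tendsto (fun x : ℝ => Real.exp (-ξ) * (γ / (((1 + x) ^ γ - 1) / x)))
        (nhdsWithin 0 (Ioi 0)) (nhds (Real.exp (-ξ))) := by
      have := (tendsto_const_nhds (x := γ)).div (aux_slope γ hγ0.ne') hγ0.ne'
      have h := this.const_mul (Real.exp (-ξ))
      rw [show Real.exp (-ξ) * (γ / γ) = Real.exp (-ξ) by field_simp] at h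
      exact h
    have hev : ∀ᶠ x in nhdsWithin (0:ℝ) (Ioi 0), 0 < x ∧
        Real.exp (-ξ) - ε/2 < Real.exp (-ξ) * (1 + x) ^ (-β - 1) ∧
        Real.exp (-ξ) * (γ / (((1 + x) ^ γ - 1) / x)) < Real.exp (-ξ) + ε/2 := by
      filter_upwards [self_mem_nhdsWithin,
        h1.eventually (eventually_gt_nhds (show Real.exp (-ξ) - ε/2 < Real.exp (-ξ) by linarith)),
        h2.eventually (eventually_lt_nhds (show Real.exp (-ξ) < Real.exp (-ξ) + ε/2 by linarith))] with x hx hgt hlt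
      exact ⟨hx, hgt, hlt⟩
    obtain ⟨x, hx⟩ := hev.exists
    exact ⟨x, hx.1, hx.2.1, hx.2.2⟩
  set c : ℝ := (1 + δ) ^ (-β - 1) with hc
  set m : ℝ := ((1 + δ) ^ γ - 1) / δ with hm
  set p : ℝ := (1 + δ) ^ γ with hpdef
  have hp : (1:ℝ) < p :=
    (Real.one_lt_rpow_iff_of_pos (by linarith)).2 (Or.inl ⟨by linarith, hγ0⟩)
  have hmpos : 0 < m := div_pos (by simp only [hpdef] at hp; linarith) hδ0
  have hβ0 : (0:ℝ) < β := by linarith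
  -- limit of the lower bound function
  have hlow : Tendsto (fun s => s * (Real.exp (-L s) *
      ((1 - Real.exp (-(γ * L s * δ))) / (γ * L s)) * (β * c)))
      atTop (nhds (Real.exp (-ξ) * c)) := by
    have hE : Tendsto (fun s => Real.exp (-(γ * L s * δ))) atTop (nhds 0) := by
      apply Real.tendsto_exp_neg_atTop_nhds_zero.comp
      exact (hA.const_mul_atTop hγ0).atTop_mul_const hδ0
    have h := hB.mul (((tendsto_const_nhds (x := (1:ℝ))).sub hE).mul_const (β / γ * c))
    have heq : (γ / β * Real.exp (-ξ)) * ((1 - 0) * (β / γ * c)) = Real.exp (-ξ) * c := by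
      field_simp
      ring
    rw [heq] at h
    refine h.congr fun s => by ring
  -- limit of the upper bound function
  have hup : Tendsto (fun s => s * Real.exp (-L s) * (β / (m * L s))
      + s * Real.exp (-(p * L s)) * (1 + δ) ^ (-β))
      atTop (nhds (Real.exp (-ξ) * (γ / m) + 0)) := by
    have hup1 : Tendsto (fun s => s * Real.exp (-L s) * (β / (m * L s)))
        atTop (nhds (Real.exp (-ξ) * (γ / m))) := by
      have h := hB.mul_const (β / m)
      have heq : (γ / β * Real.exp (-ξ)) * (β / m) = Real.exp (-ξ) * (γ / m) := by
        field_simp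
      rw [heq] at h
      refine h.congr fun s => aux_alg1 s (Real.exp (-L s)) β m (L s)
    have hup2 : Tendsto (fun s => s * Real.exp (-(p * L s)) * (1 + δ) ^ (-β))
        atTop (nhds 0) := by
      have hq : (0:ℝ) < p - 1 := by linarith
      have hxe : Tendsto (fun x : ℝ => x * Real.exp (-((p - 1) * x))) atTop (nhds 0) := by
        have h0 := Real.tendsto_pow_mul_exp_neg_atTop_nhds_zero 1
        have h1 := h0.comp (tendsto_id.const_mul_atTop hq)
        have h2 := h1.const_mul ((p - 1)⁻¹)
        rw [mul_zero] at h2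
        refine h2.congr fun x => ?_
        simp only [Function.comp, pow_one, id_eq]
        field_simp
      have hLe : Tendsto (fun s => L s * Real.exp (-((p - 1) * L s))) atTop (nhds 0) :=
        hxe.comp hA
      have h := (hB.mul hLe).mul_const ((1 + δ) ^ (-β) : ℝ)
      rw [show (γ / β * Real.exp (-ξ)) * 0 * ((1 + δ) ^ (-β) : ℝ) = 0 by ring] at h
      refine Tendsto.congr' ?_ h
      filter_upwards [hA.eventually_gt_atTop 0] with s hLs
      have hexp : Real.exp (-(p * L s)) = Real.exp (-L s) * Real.exp (-((p - 1) * L s)) := by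
        rw [← Real.exp_add]; congr 1; ring
      rw [hexp]
      field_simp
    exact hup1.add hup2
  rw [add_zero] at hup
  -- final assembly
  filter_upwards [hA.eventually_gt_atTop 0, eventually_ge_atTop (0:ℝ),
    hlow.eventually (eventually_gt_nhds hX1),
    hup.eventually (eventually_lt_nhds hX2)] with s hLs hs0 hlows hups
  have hlb := aux_lower β γ δ (L s) hβ1 hγ0 hγ1 hδ0 hLs
  have hub := aux_upper β γ δ (L s) hβ1 hγ0 hγ1 hδ0 hLs
  have hFlb := mul_le_mul_of_nonneg_left hlb hs0
  have hFub := mul_le_mul_of_nonneg_left hub hs0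
  rw [mul_add] at hFub
  rw [Real.dist_eq, abs_sub_lt_iff]
  constructor
  · have : s * (Real.exp (-L s) * (β / (m * L s)))
        + s * (Real.exp (-(p * L s)) * (1 + δ) ^ (-β))
        = s * Real.exp (-L s) * (β / (m * L s))
          + s * Real.exp (-(p * L s)) * (1 + δ) ^ (-β) := by ring
    rw [this] at hFub
    linarith
  · linarith

theorem isolated_nodes_mean_tendsto
    (d : ℕ) (hd : 1 ≤ d) (α β η ξ : ℝ)
    (hα : 0 < α) (hβ : 0 < β) (hη : 0 < η)
    (hαd : (d : ℝ) < α) (hβ1 : 1 < β)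
    (c₀ : ℝ)
    (hc₀ : c₀ = (volume (Metric.closedBall (0 : EuclideanSpace ℝ (Fin d)) 1)).toReal *
      (α * β / (α * β - d)) * η ^ ((d : ℝ) / α) * Real.Gamma (1 - (d : ℝ) / α))
    (r : ℝ → ℝ)
    (hr : ∀ᶠ s in atTop, 0 < r s ∧
      r s ^ d = (1 / (c₀ * s)) *
        (Real.log s - Real.log (Real.log s) + ξ + Real.log (α * β / d))) :
    Tendsto (fun s : ℝ =>
        s * ∫ w in Ioi (1 : ℝ),
          Real.exp (-(c₀ * s * r s ^ d * w ^ ((d : ℝ) / α))) * (β * w ^ (-β - 1)))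
      atTop (nhds (Real.exp (-ξ))) := by
  have hd0 : (0:ℝ) < d := by exact_mod_cast Nat.lt_of_lt_of_le Nat.zero_lt_one hd
  have hγ0 : 0 < (d:ℝ) / α := div_pos hd0 hα
  have hγ1 : (d:ℝ) / α < 1 := (div_lt_one hα).2 hαd
  have hαβd : (0:ℝ) < α * β - d := by nlinarith
  have hαβd' : (0:ℝ) < α * β / d := by positivity
  have hc₀pos : 0 < c₀ := by
    rw [hc₀]
    have h1 : 0 < (volume (Metric.closedBall (0 : EuclideanSpace ℝ (Fin d)) 1)).toReal := by
      apply ENNReal.toReal_pos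
      · exact (Metric.measure_closedBall_pos volume _ one_pos).ne'
      · exact (MeasureTheory.measure_closedBall_lt_top).ne
    have h3 : 0 < Real.Gamma (1 - (d:ℝ)/α) := Real.Gamma_pos_of_pos (by linarith)
    have h4 : (0:ℝ) < η ^ ((d:ℝ)/α) := Real.rpow_pos_of_pos hη _
    have h2 : (0:ℝ) < α * β / (α * β - d) := by positivity
    positivity
  set L : ℝ → ℝ :=
    fun s => Real.log s - Real.log (Real.log s) + ξ + Real.log (α * β / d) with hLdef
  have hA : Tendsto L atTop atTop := by
    apply tendsto_atTop_mono' atTop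
      (f₁ := fun s => Real.log s / 2 + (ξ + Real.log (α * β / d) : ℝ))
    · filter_upwards [eventually_gt_atTop (1:ℝ)] with s hs
      have hlog : 0 < Real.log s := Real.log_pos hs
      have := aux_log_le_half hlog
      simp only [hLdef]
      linarith
    · exact tendsto_atTop_add_const_right atTop _
        (Real.tendsto_log_atTop.atTop_div_const (by norm_num))
  have hlogdiv : Tendsto (fun s => Real.log (Real.log s) / Real.log s) atTop (nhds 0) := by
    have h := Real.isLittleO_log_id_atTop.tendsto_div_nhds_zero.comp Real.tendsto_log_atTop
    exact h
  have hD : Tendsto (fun s => 1 - Real.log (Real.log s) / Real.log s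
      + (ξ + Real.log (α * β / d)) / Real.log s) atTop (nhds 1) := by
    have h := ((tendsto_const_nhds (x := (1:ℝ))).sub hlogdiv).add
      ((tendsto_const_nhds (x := (ξ + Real.log (α * β / d) : ℝ))).div_atTop
        Real.tendsto_log_atTop)
    simpa using h
  have hloL : Tendsto (fun s => Real.log s / L s) atTop (nhds 1) := by
    have h := hD.inv₀ one_ne_zero
    rw [inv_one] at h
    refine Tendsto.congr' ?_ h
    filter_upwards [eventually_gt_atTop (1:ℝ)] with s hs
    have hls : Real.log s ≠ 0 := (Real.log_pos hs).ne'
    have hLs : L s = (1 - Real.log (Real.log s) / Real.log s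
        + (ξ + Real.log (α * β / d)) / Real.log s) * Real.log s := by
      simp only [hLdef]
      field_simp
      ring
    rw [hLs, div_mul_cancel_right₀ hls]
  have hB : Tendsto (fun s => s * Real.exp (-L s) / L s) atTop
      (nhds ((d:ℝ)/α / β * Real.exp (-ξ))) := by
    have h := hloL.const_mul (Real.exp (-ξ) * ((d:ℝ) / (α * β)))
    rw [mul_one] at h
    have hval : Real.exp (-ξ) * ((d:ℝ) / (α * β)) = (d:ℝ)/α / β * Real.exp (-ξ) := by
      field_simp
    rw [hval] at h
    refine Tendsto.congr' ?_ h
    filter_upwards [eventually_gt_atTop (Real.exp 1)] with s hs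
    have hs1 : (1:ℝ) < s := lt_trans (by
      have := Real.exp_one_gt_d9
      linarith) hs
    have hs0 : (0:ℝ) < s := by linarith
    have hlog : 0 < Real.log s := Real.log_pos hs1
    have e1 : Real.exp (-(Real.log s)) = s⁻¹ := by
      rw [Real.exp_neg, Real.exp_log hs0]
    have e2 : Real.exp (-(Real.log (α * β / d))) = (d:ℝ) / (α * β) := by
      rw [Real.exp_neg, Real.exp_log hαβd', inv_div]
    have hexpL : Real.exp (-L s) = Real.exp (Real.log (Real.log s))
        * Real.exp (-(Real.log s)) * Real.exp (-ξ)
        * Real.exp (-(Real.log (α * β / d))) := by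
      rw [← Real.exp_add, ← Real.exp_add, ← Real.exp_add]
      congr 1
      simp only [hLdef]
      ring
    rw [Real.exp_log hlog, e1, e2] at hexpL
    rw [hexpL]
    have hfinal : (d:ℝ) / α / β * Real.exp (-ξ) * (Real.log s / L s)
        = ((d:ℝ) / α / β * Real.exp (-ξ) * Real.log s) / L s := by ring
    have hfinal2 : s * (Real.log s * s⁻¹ * Real.exp (-ξ) * ((d:ℝ) / (α * β))) / L s
        = ((d:ℝ) / α / β * Real.exp (-ξ) * Real.log s) / L s := by
      congr 1
      field_simp
    rw [hfinal, hfinal2]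
  have hmain := aux_main hβ1 hγ0 hγ1 L hA hB
  refine Tendsto.congr' ?_ hmain
  filter_upwards [hr, eventually_gt_atTop (0:ℝ)] with s hs hs0
  obtain ⟨hrpos, hreq⟩ := hs
  have hkey : c₀ * s * r s ^ d = L s := by
    rw [hreq]
    simp only [hLdef]
    field_simp
  rw [hkey]
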